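/- arXiv:1110.4093 — 2 statements merged into one kernel-verified Lean document; each statement's English description precedes it below -/
import Mathlib

section
/- In PSL(2,ℤ), if g = t₁·t₂ with t₁ = t₂ both equal to the same Dehn twist, then g is conjugate to R². Conversely, the only way to write R² as a product of two Dehn twists t₁·t₂ is t₁ = t₂ = R. -/
abbrev SL2Z := Matrix.SpecialLinearGroup (Fin 2) ℤ

/-- The modular group `PSL(2,ℤ) = SL(2,ℤ)/±id`. -/
abbrev PSL2Z := SL2Z ⧸ Subgroup.center SL2Z

/-- The image of `[[1,1],[0,1]]` in `PSL(2,ℤ)`. -/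
def L : PSL2Z := QuotientGroup.mk ⟨!![1, 1; 0, 1], by simp [Matrix.det_fin_two_of]⟩

/-- The image of `[[1,0],[-1,1]]` in `PSL(2,ℤ)`. -/
def R : PSL2Z := QuotientGroup.mk ⟨!![1, 0; -1, 1], by simp [Matrix.det_fin_two_of]⟩


/-- A Dehn twist in `PSL(2,ℤ)` is a conjugate of `R`. -/
def IsDehnTwist (t : PSL2Z) : Prop := IsConj R t

/- ### Auxiliary material -/

/-- The standard lift of `R` to `SL(2,ℤ)`. -/
def R₀ : SL2Z := ⟨!![1, 0; -1, 1], by simp [Matrix.det_fin_two_of]⟩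

lemma R_eq_mk : R = QuotientGroup.mk R₀ := rfl

/-- The parametrized family of (lifts of) conjugates of `R`. -/
def T (b d : ℤ) : SL2Z := ⟨!![1 - b*d, b^2; -d^2, 1 + b*d], by
  simp [Matrix.det_fin_two_of]; ring⟩

lemma conj_R₀ (A : SL2Z) : A * R₀ * A⁻¹ = T (A.1 0 1) (A.1 1 1) := by
  have hd : A.1 0 0 * A.1 1 1 - A.1 0 1 * A.1 1 0 = 1 := by
    have := A.2; rwa [Matrix.det_fin_two] at this
  ext i j
  simp only [Matrix.SpecialLinearGroup.coe_mul, Matrix.SpecialLinearGroup.coe_inv]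
  simp only [Matrix.SpecialLinearGroup.coe_mul, Matrix.SpecialLinearGroup.coe_inv,
    Matrix.adjugate_fin_two, R₀, T]
  fin_cases i <;> fin_cases j <;>
    simp [Matrix.mul_apply, Fin.sum_univ_two, Matrix.etaExpand_eq] <;> nlinarith [hd]

lemma center_sl2z (A : SL2Z) (h : A ∈ Subgroup.center SL2Z) : A = 1 ∨ A = -1 := by
  rw [Matrix.SpecialLinearGroup.mem_center_iff] at h
  obtain ⟨r, hr, hA⟩ := h
  simp only [Fintype.card_fin] at hr
  have h2 : r * r = 1 := by nlinarith
  have : r = 1 ∨ r = -1 := by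
    rcases Int.eq_one_or_neg_one_of_mul_eq_one' h2 with ⟨h1, _⟩ | ⟨h1, _⟩ <;> simp [h1]
  rcases this with rfl | rfl
  · left; ext i j; rw [← hA]; simp
  · right; ext i j; rw [← hA]
    fin_cases i <;> fin_cases j <;> simp [Matrix.scalar_apply]

lemma key_pos (b d f h : ℤ)
    (e11 : (1-b*d)*(1-f*h) - b^2*h^2 = 1)
    (e12 : (1-b*d)*f^2 + b^2*(1+f*h) = 0)
    (e21 : -d^2*(1-f*h) - h^2*(1+b*d) = -2)
    (e22 : -d^2*f^2 + (1+b*d)*(1+f*h) = 1) :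
    b = 0 ∧ d^2 = 1 ∧ f = 0 ∧ h^2 = 1 := by
  set k := d*f - b*h with hk
  have h1 : b*d + f*h = b*h*k := by rw [hk]; nlinarith [e11]
  have h2 : b*d + f*h = d*f*k := by rw [hk]; nlinarith [e22]
  have hk0 : k = 0 := by nlinarith [sq_nonneg k]
  have hk0' : d*f - b*h = 0 := hk ▸ hk0
  have hbf : f^2 + b^2 = b*f*(d*f - b*h) := by linear_combination e12
  rw [hk0', mul_zero] at hbf
  have hb : b = 0 := by nlinarith [sq_nonneg b, sq_nonneg f]
  have hf : f = 0 := by nlinarith [sq_nonneg b, sq_nonneg f]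
  subst hb hf
  have hdh : d^2 + h^2 = 2 := by nlinarith [e21]
  have hd1 : -1 ≤ d ∧ d ≤ 1 ∧ -1 ≤ h ∧ h ≤ 1 := by
    refine ⟨?_, ?_, ?_, ?_⟩ <;>
      nlinarith [sq_nonneg d, sq_nonneg h, sq_nonneg (d-1), sq_nonneg (d+1),
        sq_nonneg (h-1), sq_nonneg (h+1)]
  obtain ⟨hd1, hd2, hh1, hh2⟩ := hd1
  interval_cases d <;> interval_cases h <;> simp_all

lemma key_neg (b d f h : ℤ)
    (e11 : (1-b*d)*(1-f*h) - b^2*h^2 = -1)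
    (e12 : (1-b*d)*f^2 + b^2*(1+f*h) = 0)
    (e21 : -d^2*(1-f*h) - h^2*(1+b*d) = 2)
    (e22 : -d^2*f^2 + (1+b*d)*(1+f*h) = -1) : False := by
  set k := d*f - b*h with hk
  have h1 : b*d + f*h = b*h*k + 2 := by rw [hk]; nlinarith [e11]
  have h2 : b*d + f*h = d*f*k - 2 := by rw [hk]; nlinarith [e22]
  have hk4 : k*k = 4 := by nlinarith
  have h3 : d^2 + h^2 - d*h*k + 2 = 0 := by rw [hk]; nlinarith [e21]
  nlinarith [sq_nonneg (2*d - h*k), h3, hk4]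

/-- `T b d` with `b = 0`, `d² = 1` is `R₀`. -/
lemma T_eq_R₀ (b d : ℤ) (hb : b = 0) (hd : d^2 = 1) : T b d = R₀ := by
  subst hb
  ext i j
  fin_cases i <;> fin_cases j <;> simp [T, R₀, hd]

lemma prod_eq_pos (b d f h : ℤ) (hP : T b d * T f h = R₀ ^ 2) :
    b = 0 ∧ d^2 = 1 ∧ f = 0 ∧ h^2 = 1 := by
  have hPm : ((T b d * T f h : SL2Z) : Matrix (Fin 2) (Fin 2) ℤ)
      = ((R₀ ^ 2 : SL2Z) : Matrix (Fin 2) (Fin 2) ℤ) := congrArg _ hP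
  have e11 := congrFun (congrFun hPm 0) 0
  have e12 := congrFun (congrFun hPm 0) 1
  have e21 := congrFun (congrFun hPm 1) 0
  have e22 := congrFun (congrFun hPm 1) 1
  simp only [Matrix.SpecialLinearGroup.coe_mul, Matrix.SpecialLinearGroup.coe_pow,
    Matrix.SpecialLinearGroup.coe_neg] at e11 e12 e21 e22
  simp [T, R₀, pow_two, Matrix.mul_apply, Fin.sum_univ_two] at e11 e12 e21 e22
  exact key_pos b d f h (by linear_combination e11) (by linear_combination e12)
    (by linear_combination e21) (by linear_combination e22)

lemma prod_eq_neg (b d f h : ℤ) (hP : T b d * T f h = -(R₀ ^ 2)) : False := by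
  have hPm : ((T b d * T f h : SL2Z) : Matrix (Fin 2) (Fin 2) ℤ)
      = ((-(R₀ ^ 2) : SL2Z) : Matrix (Fin 2) (Fin 2) ℤ) := congrArg _ hP
  have e11 := congrFun (congrFun hPm 0) 0
  have e12 := congrFun (congrFun hPm 0) 1
  have e21 := congrFun (congrFun hPm 1) 0
  have e22 := congrFun (congrFun hPm 1) 1
  simp only [Matrix.SpecialLinearGroup.coe_mul, Matrix.SpecialLinearGroup.coe_pow,
    Matrix.SpecialLinearGroup.coe_neg] at e11 e12 e21 e22
  simp [T, R₀, pow_two, Matrix.mul_apply, Fin.sum_univ_two] at e11 e12 e21 e22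
  exact key_neg b d f h (by linear_combination e11) (by linear_combination e12)
    (by linear_combination e21) (by linear_combination e22)

/-- The square of any Dehn twist is conjugate to `R²`; conversely, the only way
to write `R²` as a product of two Dehn twists is `R · R`. -/
theorem square_of_dehn_twist_and_factorizations_of_R2 :
    (∀ t : PSL2Z, IsDehnTwist t → IsConj (R ^ 2) (t * t)) ∧
    (∀ t₁ t₂ : PSL2Z, IsDehnTwist t₁ → IsDehnTwist t₂ → t₁ * t₂ = R ^ 2 →
      t₁ = R ∧ t₂ = R) := by
  constructor
  · intro t ht
    rw [IsDehnTwist, isConj_iff] at ht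
    obtain ⟨c, hc⟩ := ht
    rw [isConj_iff]
    exact ⟨c, by rw [← hc, sq]; group⟩
  · intro t₁ t₂ h₁ h₂ hmul
    rw [IsDehnTwist, isConj_iff] at h₁ h₂
    obtain ⟨c₁, hc₁⟩ := h₁
    obtain ⟨c₂, hc₂⟩ := h₂
    obtain ⟨A, rfl⟩ := QuotientGroup.mk_surjective c₁
    obtain ⟨B, rfl⟩ := QuotientGroup.mk_surjective c₂
    have ht₁ : t₁ = QuotientGroup.mk (T (A.1 0 1) (A.1 1 1)) := by
      rw [← hc₁, R_eq_mk, ← conj_R₀]; rfl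
    have ht₂ : t₂ = QuotientGroup.mk (T (B.1 0 1) (B.1 1 1)) := by
      rw [← hc₂, R_eq_mk, ← conj_R₀]; rfl
    set b := A.1 0 1; set d := A.1 1 1; set f := B.1 0 1; set h := B.1 1 1
    have hmul' : (QuotientGroup.mk (T b d * T f h) : PSL2Z) = QuotientGroup.mk (R₀ ^ 2) := by
      rw [QuotientGroup.mk_mul, ← ht₁, ← ht₂, hmul, R_eq_mk]
      rfl
    rw [QuotientGroup.eq] at hmul'
    rcases center_sl2z _ hmul' with hc | hc
    · have hP : T b d * T f h = R₀ ^ 2 := by rwa [inv_mul_eq_one] at hc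
      obtain ⟨hb, hd, hf, hh⟩ := prod_eq_pos b d f h hP
      constructor
      · rw [ht₁, T_eq_R₀ b d hb hd, R_eq_mk]
      · rw [ht₂, T_eq_R₀ f h hf hh, R_eq_mk]
    · exfalso
      apply prod_eq_neg b d f h
      have : R₀ ^ 2 = (T b d * T f h) * (-1) := by
        rw [← hc, mul_inv_cancel_left]
      rw [this]
      ext i j
      simp
end

section
/- In PSL(2,ℤ), if a hyperbolic element g is a product of two Dehn twists and g = hⁿ for some h ∈ PSL(2,ℤ) and n ≥ 1, then n ≤ 2. -/
/-- An element of `PSL(2,ℤ)` is hyperbolic if a (hence any) matrix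
representative has trace of absolute value greater than `2`. -/
def IsHyperbolic (g : PSL2Z) : Prop :=
  ∃ A : SL2Z, (QuotientGroup.mk A : PSL2Z) = g ∧
    2 < |Matrix.trace (A : Matrix (Fin 2) (Fin 2) ℤ)|

namespace DTAux

open Matrix

/-- Chebyshev-like sequence: `u τ 0 = 0`, `u τ 1 = 1`, `u τ (k+2) = τ·u τ (k+1) - u τ k`. -/
def u (τ : ℤ) : ℕ → ℤ
  | 0 => 0
  | 1 => 1
  | (k+2) => τ * u τ (k+1) - u τ k

lemma u_quad (τ : ℤ) : ∀ k : ℕ, (u τ (k+1))^2 - τ * u τ (k+1) * u τ k + (u τ k)^2 = 1 := by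
  intro k
  induction k with
  | zero => simp [u]
  | succ k ih =>
    have h : u τ (k+2) = τ * u τ (k+1) - u τ k := rfl
    rw [h]; ring_nf; ring_nf at ih; linarith

lemma u_neg (τ : ℤ) : ∀ k : ℕ, u (-τ) k = (-1)^(k+1) * u τ k := by
  intro k
  induction k using Nat.strong_induction_on with
  | _ k ih =>
    match k with
    | 0 => simp [u]
    | 1 => simp [u]
    | (k+2) =>
      have h1 := ih (k+1) (by omega)
      have h0 := ih k (by omega)
      show (-τ) * u (-τ) (k+1) - u (-τ) k = _
      rw [h1, h0]
      show _ = (-1)^(k+3) * (τ * u τ (k+1) - u τ k)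
      ring

lemma u_mono (τ : ℤ) (hτ : 3 ≤ τ) : ∀ k : ℕ, 0 ≤ u τ k ∧ u τ k + 1 ≤ u τ (k+1) := by
  intro k
  induction k with
  | zero => simp [u]
  | succ k ih =>
    obtain ⟨h0, h1⟩ := ih
    have h : u τ (k+2) = τ * u τ (k+1) - u τ k := rfl
    constructor
    · linarith
    · rw [h]; nlinarith

lemma u_ge (τ : ℤ) (hτ : 3 ≤ τ) {n : ℕ} (hn : 3 ≤ n) : τ^2 - 1 ≤ u τ n := by
  induction n, hn using Nat.le_induction with
  | base =>
    have : u τ 3 = τ * (τ * 1 - 0) - 1 := rfl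
    rw [this]; ring_nf
    omega
  | succ n hn ih =>
    have := (u_mono τ hτ n).2
    linarith

lemma key (σ u' m : ℤ) (hσ : 3 ≤ σ) (hu : σ^2 - 1 ≤ u') (hm : 1 ≤ m)
    (heq : u' * (m^2 + 4 - σ^2) = 4 * m) : False := by
  rcases lt_trichotomy m σ with h | h | h
  · have hx : m^2 + 4 - σ^2 < 0 := by nlinarith
    have : u' * (m^2 + 4 - σ^2) < 0 := mul_neg_of_pos_of_neg (by nlinarith) hx
    linarith
  · subst h; nlinarith
  · have hx : m < m^2 + 4 - σ^2 := by nlinarith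
    have h1 : 8 * (m^2 + 4 - σ^2) ≤ u' * (m^2 + 4 - σ^2) := by
      apply mul_le_mul_of_nonneg_right (by nlinarith) (by nlinarith)
    linarith

/-- core helper: positive-trace case -/
lemma core_pos (σ p b : ℤ) (n : ℕ) (hn : 3 ≤ n) (hp : 4 < p^2) (hσ : 3 ≤ σ)
    (h1 : p^2 = u σ n * b ∨ p^2 = -(u σ n * b))
    (hid : (σ^2 - 4) * (u σ n)^2 = p^2 * (p^2 - 4)) : False := by
  set v := u σ n with hv
  have hvpos : 0 < v := by have := u_ge σ hσ hn; nlinarith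
  have hm : ∃ m : ℤ, 1 ≤ m ∧ p^2 = v * m := by
    rcases h1 with h | h
    · refine ⟨b, ?_, h⟩
      nlinarith
    · refine ⟨-b, ?_, by linarith [h]⟩
      nlinarith
  obtain ⟨m, hm1, hm2⟩ := hm
  have hmul : v * (v * (σ^2 - 4)) = v * (m * (v * m - 4)) := by
    have : (σ^2 - 4) * v^2 = (v*m) * ((v*m) - 4) := by rw [← hm2]; exact hid
    ring_nf; ring_nf at this; linarith
  have hcancel : v * (σ^2 - 4) = m * (v * m - 4) :=
    mul_left_cancel₀ (ne_of_gt hvpos) hmul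
  have heq : v * (m^2 + 4 - σ^2) = 4 * m := by ring_nf; ring_nf at hcancel; linarith
  exact key σ v m hσ (by have := u_ge σ hσ hn; linarith) hm1 heq

/-- Full arithmetic core. -/
lemma core (τ p b : ℤ) (n : ℕ) (hn : 3 ≤ n) (hp : 4 < p^2)
    (h1 : p^2 = u τ n * b ∨ p^2 = -(u τ n * b))
    (h2 : 2 - p^2 = τ * u τ n - 2 * u τ (n-1) ∨
          2 - p^2 = -(τ * u τ n - 2 * u τ (n-1))) : False := by
  have hk : n - 1 + 1 = n := by omega
  have hq := u_quad τ (n-1)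
  rw [hk] at hq
  have hD : (τ * u τ n - 2 * u τ (n-1))^2 - (τ^2 - 4) * (u τ n)^2 = 4 := by
    ring_nf; ring_nf at hq; nlinarith [hq]
  have hDval : (τ * u τ n - 2 * u τ (n-1))^2 = (2 - p^2)^2 := by
    rcases h2 with h | h <;> rw [h] <;> ring
  have hid : (τ^2 - 4) * (u τ n)^2 = p^2 * (p^2 - 4) := by nlinarith [hD, hDval]
  have hτ2 : 4 < τ^2 := by
    by_contra hcon
    push_neg at hcon
    have h4 : (τ^2 - 4) * (u τ n)^2 ≤ 0 :=
      mul_nonpos_of_nonpos_of_nonneg (by linarith) (sq_nonneg _)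
    nlinarith
  have hτ3 : 3 ≤ τ ∨ τ ≤ -3 := by
    rcases le_or_gt 0 τ with h | h
    · left; nlinarith
    · right; nlinarith
  rcases hτ3 with hτ | hτ
  · exact core_pos τ p b n hn hp hτ h1 hid
  · have hσ : 3 ≤ -τ := by linarith
    have hneg : u τ n = (-1:ℤ)^(n+1) * u (-τ) n := by
      have h := u_neg (-τ) n
      rw [neg_neg] at h
      exact h
    have hs : ((-1:ℤ))^(n+1) = 1 ∨ ((-1:ℤ))^(n+1) = -1 := by
      rcases Nat.even_or_odd (n+1) with he | ho
      · left; exact he.neg_one_pow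
      · right; exact ho.neg_one_pow
    have hsq : (u τ n)^2 = (u (-τ) n)^2 := by
      rcases hs with h | h <;> rw [hneg, h] <;> ring
    have hid' : ((-τ)^2 - 4) * (u (-τ) n)^2 = p^2 * (p^2 - 4) := by
      rw [show ((-τ)^2 - 4) = (τ^2 - 4) by ring, ← hsq]; exact hid
    have h1' : p^2 = u (-τ) n * b ∨ p^2 = -(u (-τ) n * b) := by
      rcases hs with h | h <;> rw [hneg, h] at h1
      · rcases h1 with h' | h'
        · left; linarith [h']
        · right; linarith [h']
      · rcases h1 with h' | h'
        · right; linarith [h']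
        · left; linarith [h']
    exact core_pos (-τ) p b n hn hp hσ h1' hid'

variable (A : Matrix (Fin 2) (Fin 2) ℤ)

lemma sq_eq (hA : A.det = 1) : A ^ 2 = A.trace • A - 1 := by
  rw [Matrix.det_fin_two] at hA
  ext i j
  rw [pow_two]
  fin_cases i <;> fin_cases j <;>
    simp only [Matrix.mul_apply, Fin.sum_univ_two, Matrix.sub_apply, Matrix.smul_apply,
      smul_eq_mul, Matrix.trace_fin_two, Matrix.one_apply, if_true, if_false] <;>
    norm_num <;> linarith [hA]

lemma pow_eq (hA : A.det = 1) : ∀ k : ℕ, A ^ (k+1) = u A.trace (k+1) • A - u A.trace k • 1 := by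
  intro k
  induction k with
  | zero => simp [u]
  | succ k ih =>
    have h2 : u A.trace (k+2) = A.trace * u A.trace (k+1) - u A.trace k := rfl
    have hstep : A ^ (k+2) = A ^ (k+1) * A := by rw [pow_succ]
    rw [hstep, ih, h2, sub_mul, smul_mul_assoc, smul_mul_assoc, one_mul, ← pow_two,
      sq_eq A hA]
    ext i j
    simp only [Matrix.sub_apply, Matrix.smul_apply, smul_eq_mul, Matrix.mul_apply,
      Fin.sum_univ_two, Matrix.one_apply]
    fin_cases i <;> fin_cases j <;> norm_num <;> ring

lemma pow_apply01 (hA : A.det = 1) (n : ℕ) (hn : 1 ≤ n) :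
    (A ^ n) 0 1 = u A.trace n * A 0 1 := by
  obtain ⟨k, rfl⟩ : ∃ k, n = k + 1 := ⟨n - 1, by omega⟩
  rw [pow_eq A hA k]
  simp only [Matrix.sub_apply, Matrix.smul_apply, smul_eq_mul, Matrix.one_apply]
  norm_num

lemma pow_trace (hA : A.det = 1) (n : ℕ) (hn : 1 ≤ n) :
    (A ^ n).trace = A.trace * u A.trace n - 2 * u A.trace (n-1) := by
  obtain ⟨k, rfl⟩ : ∃ k, n = k + 1 := ⟨n - 1, by omega⟩
  have h := pow_eq A hA k
  rw [h]
  simp only [Nat.add_sub_cancel]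
  rw [Matrix.trace_sub, Matrix.trace_smul, Matrix.trace_smul, Matrix.trace_one]
  simp only [smul_eq_mul, Fintype.card_fin]
  ring

def R0 : SL2Z := ⟨!![1, 0; -1, 1], by simp [Matrix.det_fin_two_of]⟩

lemma R_eq : R = QuotientGroup.mk R0 := rfl

/-- central elements of `SL2Z` are `±1` as matrices -/
lemma center_cases (z : SL2Z) (hz : z ∈ Subgroup.center SL2Z) :
    ∃ r : ℤ, (r = 1 ∨ r = -1) ∧ (z : Matrix (Fin 2) (Fin 2) ℤ) = Matrix.scalar (Fin 2) r := by
  obtain ⟨r, hr1, hr2⟩ := Matrix.SpecialLinearGroup.mem_center_iff.mp hz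
  refine ⟨r, ?_, hr2.symm⟩
  have h : r * r = 1 := by
    have h2 : r ^ (Fintype.card (Fin 2)) = 1 := hr1
    simpa [pow_two] using h2
  exact Int.isUnit_iff.mp (IsUnit.of_mul_eq_one r h)

end DTAux

/-- If a hyperbolic element of `PSL(2,ℤ)` is a product of two Dehn twists and is
an `n`-th power with `n ≥ 1`, then `n ≤ 2`. -/
theorem hyperbolic_two_factorizable_power (g : PSL2Z) (h : PSL2Z) (n : ℕ)
    (hyp : IsHyperbolic g)
    (hfac : ∃ t₁ t₂ : PSL2Z, IsDehnTwist t₁ ∧ IsDehnTwist t₂ ∧ g = t₁ * t₂)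
    (hpow : g = h ^ n) (hn : 1 ≤ n) :
    n ≤ 2 := by
  classical
  by_contra hcon
  push_neg at hcon
  have hn3 : 3 ≤ n := hcon
  obtain ⟨A, hAg, hAtr⟩ := hyp
  obtain ⟨t₁, t₂, ht₁, ht₂, hg⟩ := hfac
  rw [IsDehnTwist, isConj_iff] at ht₁ ht₂
  obtain ⟨c₁, hc₁⟩ := ht₁
  obtain ⟨c₂, hc₂⟩ := ht₂
  obtain ⟨C₁, rfl⟩ := QuotientGroup.mk_surjective c₁
  obtain ⟨C₂, rfl⟩ := QuotientGroup.mk_surjective c₂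
  obtain ⟨H, rfl⟩ := QuotientGroup.mk_surjective h
  open DTAux Matrix in
  · set X : SL2Z := C₁ * R0 * C₁⁻¹ * (C₂ * R0 * C₂⁻¹) with hXdef
    have hXg : (QuotientGroup.mk X : PSL2Z) = g := by
      rw [hg, ← hc₁, ← hc₂, R_eq]
      rfl
    -- X = H^n * z
    have hz1 : ((QuotientGroup.mk (H ^ n) : PSL2Z)) = QuotientGroup.mk X := by
      rw [hXg, hpow]; rfl
    have hz1' : (H ^ n)⁻¹ * X ∈ Subgroup.center SL2Z := QuotientGroup.eq.mp hz1
    set z : SL2Z := (H ^ n)⁻¹ * X with hzdef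
    have hXz : X = H ^ n * z := by rw [hzdef]; group
    -- X = A * w
    have hz2 : ((QuotientGroup.mk A : PSL2Z)) = QuotientGroup.mk X := by rw [hXg, hAg]
    have hz2' : A⁻¹ * X ∈ Subgroup.center SL2Z := QuotientGroup.eq.mp hz2
    set w : SL2Z := A⁻¹ * X with hwdef
    have hXw : X = A * w := by rw [hwdef]; group
    -- conjugate by C₁⁻¹
    set C : SL2Z := C₁⁻¹ * C₂ with hCdef
    set K : SL2Z := C₁⁻¹ * H * C₁ with hKdef
    set M : SL2Z := R0 * (C * R0 * C⁻¹) with hMdef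
    have hM : M = C₁⁻¹ * X * C₁ := by rw [hMdef, hCdef, hXdef]; group
    have hKn : K ^ n = C₁⁻¹ * H ^ n * C₁ := by
      rw [hKdef]
      have := conj_pow (i := n) (a := C₁⁻¹) (b := H)
      rw [inv_inv] at this
      exact this
    have hMK : M = K ^ n * z := by
      rw [hM, hXz, hKn]
      have hcomm := Subgroup.mem_center_iff.mp hz1' C₁
      calc C₁⁻¹ * (H ^ n * z) * C₁ = C₁⁻¹ * H ^ n * (z * C₁) := by group
        _ = C₁⁻¹ * H ^ n * (C₁ * z) := by rw [← hcomm]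
        _ = C₁⁻¹ * H ^ n * C₁ * z := by group
    -- pass to matrices
    obtain ⟨r, hr, hzr⟩ := center_cases z hz1'
    obtain ⟨s, hs, hws⟩ := center_cases w hz2'
    set P : Matrix (Fin 2) (Fin 2) ℤ := (C : Matrix (Fin 2) (Fin 2) ℤ) with hPdef
    have hdetP : P.det = 1 := C.property
    have hdetrel : P 0 0 * P 1 1 - P 0 1 * P 1 0 = 1 := by
      rw [← Matrix.det_fin_two]; exact hdetP
    have hcoeM : (M : Matrix (Fin 2) (Fin 2) ℤ) =
        !![1, 0; -1, 1] * (P * (!![1, 0; -1, 1] * (P.adjugate))) := by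
      rw [hMdef]
      simp only [Matrix.SpecialLinearGroup.coe_mul, Matrix.SpecialLinearGroup.coe_inv]
      rw [mul_assoc]
      rfl
    have hM01 : (M : Matrix (Fin 2) (Fin 2) ℤ) 0 1 = (P 0 1)^2 := by
      rw [hcoeM, Matrix.adjugate_fin_two]
      simp [Matrix.mul_apply, Fin.sum_univ_two]
      ring
    have hM00 : (M : Matrix (Fin 2) (Fin 2) ℤ) 0 0 =
        P 0 0 * P 1 1 - P 0 1 * P 1 0 - P 0 1 * P 1 1 := by
      rw [hcoeM, Matrix.adjugate_fin_two]
      simp [Matrix.mul_apply, Fin.sum_univ_two]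
      ring
    have hM11 : (M : Matrix (Fin 2) (Fin 2) ℤ) 1 1 =
        -(P 0 1)^2 + P 0 0 * P 1 1 - P 0 1 * P 1 0 + P 0 1 * P 1 1 := by
      rw [hcoeM, Matrix.adjugate_fin_two]
      simp [Matrix.mul_apply, Fin.sum_univ_two]
      ring
    have hMtr : Matrix.trace (M : Matrix (Fin 2) (Fin 2) ℤ) = 2 - (P 0 1)^2 := by
      rw [Matrix.trace_fin_two, hM00, hM11]
      linear_combination 2 * hdetrel
    -- trace of M equals ± trace of A
    have htrX : Matrix.trace (X : Matrix (Fin 2) (Fin 2) ℤ) =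
        Matrix.trace (M : Matrix (Fin 2) (Fin 2) ℤ) := by
      have h5 : X = C₁ * M * C₁⁻¹ := by rw [hM]; group
      rw [h5]
      simp only [Matrix.SpecialLinearGroup.coe_mul]
      rw [Matrix.trace_mul_comm]
      rw [← mul_assoc, ← Matrix.SpecialLinearGroup.coe_mul]
      rw [inv_mul_cancel]
      simp
    have htrXA : Matrix.trace (X : Matrix (Fin 2) (Fin 2) ℤ) =
        s * Matrix.trace (A : Matrix (Fin 2) (Fin 2) ℤ) := by
      rw [hXw]
      simp only [Matrix.SpecialLinearGroup.coe_mul, hws, Matrix.scalar_apply]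
      simp [Matrix.trace_fin_two, Matrix.mul_diagonal]
      ring
    -- hyperbolicity gives 4 < p^2
    have habs : 2 < |2 - (P 0 1)^2| := by
      rw [← hMtr, ← htrX, htrXA]
      rcases hs with h | h <;> rw [h] <;> simpa [abs_neg] using hAtr
    have hp : 4 < (P 0 1)^2 := by
      rcases lt_abs.mp habs with h | h
      · nlinarith [sq_nonneg (P 0 1)]
      · linarith
    -- power side
    have hdetK : (K : Matrix (Fin 2) (Fin 2) ℤ).det = 1 := K.property
    have hn1 : 1 ≤ n := hn
    set τ : ℤ := Matrix.trace (K : Matrix (Fin 2) (Fin 2) ℤ) with hτdef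
    set b : ℤ := (K : Matrix (Fin 2) (Fin 2) ℤ) 0 1 with hbdef
    have hcoeMK : (M : Matrix (Fin 2) (Fin 2) ℤ) =
        ((K : Matrix (Fin 2) (Fin 2) ℤ))^n * (Matrix.scalar (Fin 2) r) := by
      rw [hMK]
      simp only [Matrix.SpecialLinearGroup.coe_mul, Matrix.SpecialLinearGroup.coe_pow, hzr]
    have hentry : (P 0 1)^2 = (u τ n * b) * r := by
      rw [← hM01, hcoeMK, Matrix.scalar_apply]
      rw [Matrix.mul_diagonal]
      rw [pow_apply01 _ hdetK n hn1]
    have htrace : 2 - (P 0 1)^2 = (τ * u τ n - 2 * u τ (n-1)) * r := by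
      rw [← hMtr, hcoeMK, Matrix.scalar_apply]
      have : Matrix.trace (((K : Matrix (Fin 2) (Fin 2) ℤ))^n * (Matrix.diagonal fun _ => r)) =
          Matrix.trace (((K : Matrix (Fin 2) (Fin 2) ℤ))^n) * r := by
        simp [Matrix.trace_fin_two, Matrix.mul_diagonal]
        ring
      rw [this, pow_trace _ hdetK n hn1]
    refine core τ (P 0 1) b n hn3 hp ?_ ?_
    · rcases hr with h | h <;> rw [h] at hentry
      · left; linarith [hentry]
      · right; linarith [hentry]
    · rcases hr with h | h <;> rw [h] at htrace
      · left; linarith [htrace]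
      · right; linarith [htrace]
end
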